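/- arXiv:1407.5537 — 3 statements merged into one kernel-verified Lean document; each statement's English description precedes it below -/
import Mathlib

section
/- Let λ > 0, D > 0, C ∈ (0, 1], α_l, α_n > 0, and let S_l, S_n be lognormal random variables with parameters (m_l, σ_l²) and (m_n, σ_n²) respectively. Define, for t > 0, Λ(t) := 2πλ·[ C·∫₀^D P(t·S_l > r^{α_l}) r dr + (1−C)·∫₀^D P(t·S_n > r^{α_n}) r dr + ∫_D^∞ P(t·S_n > r^{α_n}) r dr ]. Then Λ(t) = λπC·{ D²·[ Q((ln(D^{α_l}/t) − m_l)/σ_l) − Q((ln(D^{α_n}/t) − m_n)/σ_n) ] + t^{2/α_l}·exp(2σ_l²/α_l² + 2m_l/α_l)·Q((σ_l²·(2/α_l) − ln(D^{α_l}/t) + m_l)/σ_l) + t^{2/α_n}·exp(2σ_n²/α_n² + 2m_n/α_n)·[ 1/C − Q((σ_n²·(2/α_n) − ln(D^{α_n}/t) + m_n)/σ_n) ] }. -/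
open MeasureTheory ProbabilityTheory Real Set
open Filter Topology

/-- The standard Gaussian tail function `Q(x) = ∫_x^∞ (1/√(2π)) e^{-u²/2} du`. -/
noncomputable def gaussQ (x : ℝ) : ℝ :=
  ∫ u in Set.Ioi x, Real.exp (-u ^ 2 / 2) / Real.sqrt (2 * Real.pi)

noncomputable def stdPdf (u : ℝ) : ℝ := Real.exp (-u ^ 2 / 2) / Real.sqrt (2 * Real.pi)

lemma stdPdf_eq (u : ℝ) : stdPdf u = Real.exp (-(1/2:ℝ) * u ^ 2) / Real.sqrt (2 * Real.pi) := by
  unfold stdPdf; ring_nf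

lemma stdPdf_nonneg (u : ℝ) : 0 ≤ stdPdf u := by
  unfold stdPdf; positivity

lemma continuous_stdPdf : Continuous stdPdf := by
  unfold stdPdf
  fun_prop

lemma integrable_stdPdf : Integrable stdPdf := by
  have : Integrable (fun u : ℝ => Real.exp (-(1/2 : ℝ) * u ^ 2)) := integrable_exp_neg_mul_sq (by norm_num)
  simpa [funext stdPdf_eq, div_eq_mul_inv] using this.mul_const (Real.sqrt (2 * Real.pi))⁻¹

lemma sqrt_two_pi_sq : Real.sqrt (2 * Real.pi) ^ 2 = 2 * Real.pi := by
  exact Real.sq_sqrt (by positivity)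

lemma integral_stdPdf : ∫ u, stdPdf u = 1 := by
  simp only [funext stdPdf_eq]
  rw [integral_div]
  have h := integral_gaussian (1/2 : ℝ)
  rw [h, div_eq_one_iff_eq (by positivity)]
  rw [show Real.pi / (1/2) = 2 * Real.pi by ring]

lemma gaussQ_def' (x : ℝ) : gaussQ x = ∫ u in Ioi x, stdPdf u := rfl

lemma gaussQ_nonneg (x : ℝ) : 0 ≤ gaussQ x :=
  setIntegral_nonneg measurableSet_Ioi fun u _ => stdPdf_nonneg u

lemma gaussQ_eq_one_sub (x : ℝ) : gaussQ x = 1 - ∫ u in Iic x, stdPdf u := by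
  have h := intervalIntegral.integral_Iic_add_Ioi (μ := volume) (b := x)
    integrable_stdPdf.integrableOn integrable_stdPdf.integrableOn
  rw [integral_stdPdf] at h
  rw [gaussQ_def']
  linarith

lemma gaussQ_le_one (x : ℝ) : gaussQ x ≤ 1 := by
  rw [gaussQ_eq_one_sub]
  have : 0 ≤ ∫ u in Iic x, stdPdf u :=
    setIntegral_nonneg measurableSet_Iic fun u _ => stdPdf_nonneg u
  linarith

lemma gaussQ_sub (a b : ℝ) : gaussQ a - gaussQ b = ∫ u in a..b, stdPdf u := by
  rw [gaussQ_eq_one_sub, gaussQ_eq_one_sub,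
    ← intervalIntegral.integral_Iic_sub_Iic integrable_stdPdf.integrableOn
      integrable_stdPdf.integrableOn]
  ring

lemma gaussQ_eq_sub_intervalIntegral (x : ℝ) :
    gaussQ x = gaussQ 0 - ∫ u in (0:ℝ)..x, stdPdf u := by
  have := gaussQ_sub 0 x
  linarith

lemma hasDerivAt_gaussQ (x : ℝ) : HasDerivAt gaussQ (-(stdPdf x)) x := by
  have h : ∀ y, gaussQ y = gaussQ 0 - ∫ u in (0:ℝ)..y, stdPdf u :=
    gaussQ_eq_sub_intervalIntegral
  rw [funext h]
  exact ((continuous_stdPdf.integral_hasStrictDerivAt 0 x).hasDerivAt).const_sub (gaussQ 0)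

lemma continuous_gaussQ : Continuous gaussQ :=
  continuous_iff_continuousAt.2 fun x => (hasDerivAt_gaussQ x).continuousAt

lemma gaussQ_tendsto_zero : Tendsto gaussQ atTop (𝓝 0) := by
  have h : Tendsto (fun x : ℝ => ∫ u in (0:ℝ)..x, stdPdf u) atTop (𝓝 (gaussQ 0)) := by
    rw [gaussQ_def']
    exact intervalIntegral_tendsto_integral_Ioi 0 integrable_stdPdf.integrableOn tendsto_id
  have : Tendsto (fun x : ℝ => gaussQ 0 - ∫ u in (0:ℝ)..x, stdPdf u) atTop
      (𝓝 (gaussQ 0 - gaussQ 0)) := (tendsto_const_nhds).sub h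
  simp only [sub_self] at this
  exact this.congr fun x => (gaussQ_eq_sub_intervalIntegral x).symm

lemma gaussQ_neg (x : ℝ) : gaussQ (-x) = 1 - gaussQ x := by
  have heven : ∀ u : ℝ, stdPdf u = stdPdf (-u) := by
    intro u; unfold stdPdf; rw [neg_pow, show ((-1:ℝ))^2 = 1 by norm_num]; ring_nf
  have h : gaussQ (-x) = ∫ u in Iic x, stdPdf u := by
    rw [gaussQ_def']
    calc ∫ u in Ioi (-x), stdPdf u = ∫ u in Ioi (-x), stdPdf (-u) :=
          setIntegral_congr_fun measurableSet_Ioi fun u _ => heven u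
      _ = ∫ u in Iic x, stdPdf u := by rw [integral_comp_neg_Ioi]; norm_num
  rw [h, gaussQ_eq_one_sub]
  ring

lemma gaussQ_tendsto_one : Tendsto gaussQ atBot (𝓝 1) := by
  have h : Tendsto (fun x : ℝ => 1 - gaussQ (-x)) atBot (𝓝 (1 - 0)) :=
    tendsto_const_nhds.sub (gaussQ_tendsto_zero.comp tendsto_neg_atBot_atTop)
  simp only [sub_zero] at h
  refine h.congr fun x => ?_
  rw [← gaussQ_neg, neg_neg]

lemma integral_Ioi_mul_exp (x : ℝ) (hx : 0 ≤ x) :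
    (∫ u in Ioi x, u * Real.exp (-u ^ 2 / 2)) = Real.exp (-x ^ 2 / 2) := by
  have hderiv : ∀ u : ℝ, u ∈ Ici x → HasDerivAt (fun v : ℝ => -Real.exp (-v ^ 2 / 2))
      (u * Real.exp (-u ^ 2 / 2)) u := by
    intro u _
    have h1 : HasDerivAt (fun v : ℝ => -v ^ 2 / 2) (-u) u := by
      have := ((hasDerivAt_pow 2 u).neg).div_const 2
      simpa using this.congr_deriv (by ring)
    have := (Real.hasDerivAt_exp (-u ^ 2 / 2)).comp u h1
    exact this.neg.congr_deriv (by ring)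
  have h2 : Tendsto (fun v : ℝ => -v ^ 2 / 2) atTop atBot := by
    have : Tendsto (fun v : ℝ => -v ^ 2) atTop atBot :=
      (tendsto_neg_atTop_atBot).comp (tendsto_pow_atTop (by norm_num))
    exact this.atBot_div_const (by norm_num)
  have htend : Tendsto (fun v : ℝ => -Real.exp (-v ^ 2 / 2)) atTop (𝓝 0) := by
    have := (Real.tendsto_exp_atBot.comp h2).neg
    simpa using this
  have h := integral_Ioi_of_hasDerivAt_of_nonneg' hderiv
    (fun u hu => mul_nonneg (hx.trans (le_of_lt hu)) (Real.exp_pos _).le) htend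
  rw [h]; ring

lemma integrableOn_Ioi_mul_exp (x : ℝ) (hx : 0 ≤ x) :
    IntegrableOn (fun u : ℝ => u * Real.exp (-u ^ 2 / 2)) (Ioi x) := by
  have hderiv : ∀ u : ℝ, u ∈ Ici x → HasDerivAt (fun v : ℝ => -Real.exp (-v ^ 2 / 2))
      (u * Real.exp (-u ^ 2 / 2)) u := by
    intro u _
    have h1 : HasDerivAt (fun v : ℝ => -v ^ 2 / 2) (-u) u := by
      have := ((hasDerivAt_pow 2 u).neg).div_const 2
      simpa using this.congr_deriv (by ring)
    have := (Real.hasDerivAt_exp (-u ^ 2 / 2)).comp u h1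
    exact this.neg.congr_deriv (by ring)
  have h2 : Tendsto (fun v : ℝ => -v ^ 2 / 2) atTop atBot := by
    have : Tendsto (fun v : ℝ => -v ^ 2) atTop atBot :=
      (tendsto_neg_atTop_atBot).comp (tendsto_pow_atTop (by norm_num))
    exact this.atBot_div_const (by norm_num)
  have htend : Tendsto (fun v : ℝ => -Real.exp (-v ^ 2 / 2)) atTop (𝓝 0) := by
    have := (Real.tendsto_exp_atBot.comp h2).neg
    simpa using this
  exact integrableOn_Ioi_deriv_of_nonneg' hderiv (fun u hu => mul_nonneg (hx.trans (le_of_lt hu)) (Real.exp_pos _).le) htend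

lemma gaussQ_le_exp {x : ℝ} (hx : 1 ≤ x) : gaussQ x ≤ Real.exp (-x ^ 2 / 2) := by
  have h0 : (0:ℝ) ≤ x := le_trans zero_le_one hx
  rw [gaussQ_def', ← integral_Ioi_mul_exp x h0]
  refine setIntegral_mono_on integrable_stdPdf.integrableOn
    (integrableOn_Ioi_mul_exp x h0) measurableSet_Ioi ?_
  intro u hu
  have hu1 : 1 ≤ u := le_trans hx (le_of_lt hu)
  have hs : (1:ℝ) ≤ Real.sqrt (2 * Real.pi) := by
    rw [show (1:ℝ) = Real.sqrt 1 by simp]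
    exact Real.sqrt_le_sqrt (by nlinarith [Real.pi_gt_three])
  unfold stdPdf
  calc Real.exp (-u ^ 2 / 2) / Real.sqrt (2 * Real.pi) ≤ Real.exp (-u ^ 2 / 2) / 1 := by
        apply div_le_div_of_nonneg_left (le_of_lt (Real.exp_pos _)) one_pos hs
    _ = 1 * Real.exp (-u ^ 2 / 2) := by ring
    _ ≤ u * Real.exp (-u ^ 2 / 2) :=
        mul_le_mul_of_nonneg_right hu1 (le_of_lt (Real.exp_pos _))

lemma gaussianReal_Ioi_toReal (m σ : ℝ) (hσ : 0 < σ) (b : ℝ) :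
    ((gaussianReal m (Real.toNNReal (σ ^ 2))) (Ioi b)).toReal = gaussQ ((b - m) / σ) := by
  have hv1 : (⟨σ ^ 2, sq_nonneg σ⟩ : NNReal) * 1 = Real.toNNReal (σ ^ 2) := by
    ext
    simp [Real.coe_toNNReal _ (sq_nonneg σ)]
  have hmap : gaussianReal m (Real.toNNReal (σ ^ 2))
      = ((gaussianReal 0 1).map (σ * ·)).map (· + m) := by
    rw [gaussianReal_map_const_mul, gaussianReal_map_add_const, mul_zero, zero_add]
    congr 1; ext; simp [Real.coe_toNNReal _ (sq_nonneg σ)]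
  rw [hmap, Measure.map_apply (measurable_add_const m) measurableSet_Ioi,
    preimage_add_const_Ioi,
    Measure.map_apply (measurable_const_mul σ) measurableSet_Ioi]
  have : (σ * ·) ⁻¹' Ioi (b - m) = Ioi ((b - m) / σ) := preimage_const_mul_Ioi₀ _ hσ
  rw [show ((fun x => σ * x) ⁻¹' Ioi (b - m)) = Ioi ((b - m) / σ) from this,
    gaussianReal_apply_eq_integral 0 one_ne_zero,
    ENNReal.toReal_ofReal (setIntegral_nonneg measurableSet_Ioi
      fun x _ => gaussianPDFReal_nonneg _ _ _)]
  rw [gaussQ_def']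
  refine setIntegral_congr_fun measurableSet_Ioi fun u _ => ?_
  unfold gaussianPDFReal stdPdf
  norm_num
  rw [eq_comm, div_eq_iff (by positivity)]
  field_simp

lemma prob_eq_gaussQ {Ω : Type*} [MeasurableSpace Ω] (Pr : Measure Ω) [IsProbabilityMeasure Pr]
    (S : Ω → ℝ) (hS : Measurable S) (hSpos : ∀ᵐ ω ∂Pr, 0 < S ω)
    (m σ : ℝ) (hσ : 0 < σ)
    (hlog : Measure.map (fun ω => Real.log (S ω)) Pr = gaussianReal m (Real.toNNReal (σ ^ 2)))
    (α t : ℝ) (hα : 0 < α) (ht : 0 < t) (r : ℝ) (hr : 0 < r) :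
    (Pr {ω | t * S ω > r ^ α}).toReal
      = gaussQ ((α * Real.log r - Real.log t - m) / σ) := by
  set b := α * Real.log r - Real.log t with hb
  have hset : {ω | t * S ω > r ^ α} =ᵐ[Pr] (fun ω => Real.log (S ω)) ⁻¹' (Ioi b) := by
    filter_upwards [hSpos] with ω hω
    have hrα : (0:ℝ) < r ^ α := Real.rpow_pos_of_pos hr α
    have htS : (0:ℝ) < t * S ω := mul_pos ht hω
    have : (t * S ω > r ^ α) ↔ (Real.log (S ω) > b) := by
      rw [gt_iff_lt, ← Real.log_lt_log_iff hrα htS, Real.log_mul ht.ne' hω.ne',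
        Real.log_rpow hr, hb]
      constructor <;> intro h <;> linarith
    simp only [eq_iff_iff, Set.mem_setOf_eq, Set.mem_preimage, Set.mem_Ioi]
    exact this
  rw [measure_congr hset,
    ← Measure.map_apply (f := fun ω => Real.log (S ω)) (Real.measurable_log.comp hS) measurableSet_Ioi, hlog,
    gaussianReal_Ioi_toReal m σ hσ b]

lemma exp_identity (α σ c : ℝ) (hα : 0 < α) (hσ : 0 < σ) {r : ℝ} (hr : 0 < r) :
    Real.exp (2 * c / α + 2 * σ ^ 2 / α ^ 2) / 2
        * stdPdf (2 * σ / α - (α * Real.log r - c) / σ)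
      = r ^ 2 / 2 * stdPdf ((α * Real.log r - c) / σ) := by
  have hr2 : r ^ 2 = Real.exp (2 * Real.log r) := by
    rw [mul_comm, Real.exp_mul, Real.exp_log hr]
    norm_num
  have key : Real.exp (2 * c / α + 2 * σ ^ 2 / α ^ 2)
        * Real.exp (-(2 * σ / α - (α * Real.log r - c) / σ) ^ 2 / 2)
      = Real.exp (2 * Real.log r) * Real.exp (-((α * Real.log r - c) / σ) ^ 2 / 2) := by
    rw [← Real.exp_add, ← Real.exp_add]
    congr 1
    field_simp
    ring
  unfold stdPdf
  rw [hr2, div_mul_div_comm, div_mul_div_comm, key]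

lemma hasDerivAt_G (α σ c : ℝ) (hα : 0 < α) (hσ : 0 < σ) {r : ℝ} (hr : 0 < r) :
    HasDerivAt (fun s => s ^ 2 / 2 * gaussQ ((α * Real.log s - c) / σ)
        + Real.exp (2 * c / α + 2 * σ ^ 2 / α ^ 2) / 2
          * gaussQ (2 * σ / α - (α * Real.log s - c) / σ))
      (gaussQ ((α * Real.log r - c) / σ) * r) r := by
  set K := Real.exp (2 * c / α + 2 * σ ^ 2 / α ^ 2) / 2 with hK
  have hu0 : HasDerivAt (fun s : ℝ => (α * Real.log s - c) / σ) (α * r⁻¹ / σ) r :=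
    (((Real.hasDerivAt_log hr.ne').const_mul α).sub_const c).div_const σ
  have h1 : HasDerivAt (fun s : ℝ => s ^ 2 / 2) r r := by
    have := (hasDerivAt_pow 2 r).div_const 2
    exact this.congr_deriv (by ring)
  have hQ1 : HasDerivAt (fun s : ℝ => gaussQ ((α * Real.log s - c) / σ))
      (-(stdPdf ((α * Real.log r - c) / σ)) * (α * r⁻¹ / σ)) r :=
    (hasDerivAt_gaussQ _).comp r hu0
  have hQ2 : HasDerivAt (fun s : ℝ => gaussQ (2 * σ / α - (α * Real.log s - c) / σ))
      (-(stdPdf (2 * σ / α - (α * Real.log r - c) / σ)) * -(α * r⁻¹ / σ)) r :=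
    (hasDerivAt_gaussQ _).comp r (hu0.const_sub (2 * σ / α))
  have htot := (h1.mul hQ1).add (hQ2.const_mul K)
  refine htot.congr_deriv ?_
  have hkey := exp_identity α σ c hα hσ hr
  rw [← hK] at hkey
  have hexp : K * stdPdf (2 * σ / α - (α * Real.log r - c) / σ)
      = r ^ 2 / 2 * stdPdf ((α * Real.log r - c) / σ) := hkey
  linear_combination (α * r⁻¹ / σ) * hexp

lemma tendsto_u0_atBot (α σ c : ℝ) (hα : 0 < α) (hσ : 0 < σ) :
    Tendsto (fun s : ℝ => (α * Real.log s - c) / σ) (𝓝[>] (0:ℝ)) atBot := by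
  have h1 : Tendsto (fun s : ℝ => α * Real.log s) (𝓝[>] (0:ℝ)) atBot :=
    (tendsto_log_nhdsGT_zero).const_mul_atBot hα
  exact (tendsto_atBot_add_const_right _ (-c) h1).congr (fun s => by ring) |>.atBot_div_const hσ

lemma tendsto_u0_atTop (α σ c : ℝ) (hα : 0 < α) (hσ : 0 < σ) :
    Tendsto (fun s : ℝ => (α * Real.log s - c) / σ) atTop atTop := by
  have h1 : Tendsto (fun s : ℝ => α * Real.log s) atTop atTop :=
    (Real.tendsto_log_atTop).const_mul_atTop hα
  exact (tendsto_atTop_add_const_right _ (-c) h1).congr (fun s => by ring) |>.atTop_div_const hσ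

lemma G_tendsto_zero (α σ c : ℝ) (hα : 0 < α) (hσ : 0 < σ) :
    Tendsto (fun s => s ^ 2 / 2 * gaussQ ((α * Real.log s - c) / σ)
        + Real.exp (2 * c / α + 2 * σ ^ 2 / α ^ 2) / 2
          * gaussQ (2 * σ / α - (α * Real.log s - c) / σ)) (𝓝[>] (0:ℝ)) (𝓝 0) := by
  have hterm1 : Tendsto (fun s : ℝ => s ^ 2 / 2 * gaussQ ((α * Real.log s - c) / σ))
      (𝓝[>] (0:ℝ)) (𝓝 0) := by
    have hb : ∀ s : ℝ, s ^ 2 / 2 * gaussQ ((α * Real.log s - c) / σ) ≤ s ^ 2 / 2 := by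
      intro s
      calc s ^ 2 / 2 * gaussQ ((α * Real.log s - c) / σ) ≤ s ^ 2 / 2 * 1 :=
            mul_le_mul_of_nonneg_left (gaussQ_le_one _) (by positivity)
        _ = s ^ 2 / 2 := by ring
    have hg : Tendsto (fun s : ℝ => s ^ 2 / 2) (𝓝[>] (0:ℝ)) (𝓝 0) := by
      have : Tendsto (fun s : ℝ => s ^ 2 / 2) (𝓝 (0:ℝ)) (𝓝 ((0:ℝ) ^ 2 / 2)) :=
        (continuous_pow 2).div_const 2 |>.tendsto 0
      simpa using this.mono_left nhdsWithin_le_nhds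
    exact squeeze_zero' (Filter.Eventually.of_forall fun s =>
      mul_nonneg (by positivity) (gaussQ_nonneg _))
      (Filter.Eventually.of_forall hb) hg
  have hterm2 : Tendsto (fun s : ℝ => Real.exp (2 * c / α + 2 * σ ^ 2 / α ^ 2) / 2
      * gaussQ (2 * σ / α - (α * Real.log s - c) / σ)) (𝓝[>] (0:ℝ)) (𝓝 0) := by
    have hinner : Tendsto (fun s : ℝ => 2 * σ / α - (α * Real.log s - c) / σ)
        (𝓝[>] (0:ℝ)) atTop := by
      have hneg : Tendsto (fun s : ℝ => -((α * Real.log s - c) / σ)) (𝓝[>] (0:ℝ)) atTop :=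
        tendsto_neg_atBot_atTop.comp (tendsto_u0_atBot α σ c hα hσ)
      exact (tendsto_atTop_add_const_left _ (2 * σ / α) hneg).congr fun s => by ring
    have := (gaussQ_tendsto_zero.comp hinner).const_mul
      (Real.exp (2 * c / α + 2 * σ ^ 2 / α ^ 2) / 2)
    simpa using this
  simpa using hterm1.add hterm2

lemma sq_mul_gaussQ_tendsto (α σ c : ℝ) (hα : 0 < α) (hσ : 0 < σ) :
    Tendsto (fun s : ℝ => s ^ 2 / 2 * gaussQ ((α * Real.log s - c) / σ)) atTop (𝓝 0) := by
  have hu0 := tendsto_u0_atTop α σ c hα hσ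
  have hg : Tendsto (fun s : ℝ => Real.exp (5 * c / (2 * α)) / 2
      * Real.exp (-(Real.log s) / 2)) atTop (𝓝 0) := by
    have h1 : Tendsto (fun s : ℝ => -(Real.log s) / 2) atTop atBot :=
      (tendsto_neg_atTop_atBot.comp Real.tendsto_log_atTop).atBot_div_const (by norm_num)
    have := (Real.tendsto_exp_atBot.comp h1).const_mul (Real.exp (5 * c / (2 * α)) / 2)
    simpa using this
  apply squeeze_zero' (Filter.Eventually.of_forall fun s =>
    mul_nonneg (by positivity) (gaussQ_nonneg _)) ?_ hg
  filter_upwards [(hu0.eventually_ge_atTop 1), (hu0.eventually_ge_atTop (5 * σ / α)),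
    eventually_ge_atTop (1:ℝ)] with s h1 h5 hs1
  set u := (α * Real.log s - c) / σ with hu
  have hs0 : (0:ℝ) < s := lt_of_lt_of_le one_pos hs1
  have step1 : gaussQ u ≤ Real.exp (-u ^ 2 / 2) := gaussQ_le_exp h1
  have step2 : Real.exp (-u ^ 2 / 2) ≤ Real.exp (-(5 * σ / (2 * α)) * u) := by
    apply Real.exp_le_exp.2
    have h0u : (0:ℝ) ≤ u := le_trans zero_le_one h1
    have hmul := mul_le_mul_of_nonneg_left h5 (by linarith : (0:ℝ) ≤ u / 2)
    have : u / 2 * (5 * σ / α) = 5 * σ / (2 * α) * u := by ring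
    nlinarith [hmul]
  have step3 : s ^ 2 / 2 * Real.exp (-(5 * σ / (2 * α)) * u)
      = Real.exp (5 * c / (2 * α)) / 2 * Real.exp (-(Real.log s) / 2) := by
    have hs2 : s ^ 2 = Real.exp (2 * Real.log s) := by
      rw [mul_comm, Real.exp_mul, Real.exp_log hs0]; norm_num
    rw [hs2, div_mul_eq_mul_div, div_mul_eq_mul_div, ← Real.exp_add, ← Real.exp_add]
    congr 2
    rw [hu]
    field_simp
    ring
  calc s ^ 2 / 2 * gaussQ u ≤ s ^ 2 / 2 * Real.exp (-u ^ 2 / 2) :=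
        mul_le_mul_of_nonneg_left step1 (by positivity)
    _ ≤ s ^ 2 / 2 * Real.exp (-(5 * σ / (2 * α)) * u) :=
        mul_le_mul_of_nonneg_left step2 (by positivity)
    _ = _ := step3

lemma G_tendsto_K (α σ c : ℝ) (hα : 0 < α) (hσ : 0 < σ) :
    Tendsto (fun s => s ^ 2 / 2 * gaussQ ((α * Real.log s - c) / σ)
        + Real.exp (2 * c / α + 2 * σ ^ 2 / α ^ 2) / 2
          * gaussQ (2 * σ / α - (α * Real.log s - c) / σ)) atTop
      (𝓝 (Real.exp (2 * c / α + 2 * σ ^ 2 / α ^ 2) / 2)) := by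
  have hterm2 : Tendsto (fun s : ℝ => Real.exp (2 * c / α + 2 * σ ^ 2 / α ^ 2) / 2
      * gaussQ (2 * σ / α - (α * Real.log s - c) / σ)) atTop
      (𝓝 (Real.exp (2 * c / α + 2 * σ ^ 2 / α ^ 2) / 2)) := by
    have hinner : Tendsto (fun s : ℝ => 2 * σ / α - (α * Real.log s - c) / σ) atTop atBot := by
      have hneg : Tendsto (fun s : ℝ => -((α * Real.log s - c) / σ)) atTop atBot :=
        tendsto_neg_atTop_atBot.comp (tendsto_u0_atTop α σ c hα hσ)
      exact (tendsto_atBot_add_const_left _ (2 * σ / α) hneg).congr fun s => by ring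
    have := (gaussQ_tendsto_one.comp hinner).const_mul
      (Real.exp (2 * c / α + 2 * σ ^ 2 / α ^ 2) / 2)
    simpa using this
  have := (sq_mul_gaussQ_tendsto α σ c hα hσ).add hterm2
  simpa using this

lemma integral_Ioi_eq (α σ c D : ℝ) (hα : 0 < α) (hσ : 0 < σ) (hD : 0 < D) :
    ∫ r in Ioi D, gaussQ ((α * Real.log r - c) / σ) * r
      = Real.exp (2 * c / α + 2 * σ ^ 2 / α ^ 2) / 2
        - (D ^ 2 / 2 * gaussQ ((α * Real.log D - c) / σ)
          + Real.exp (2 * c / α + 2 * σ ^ 2 / α ^ 2) / 2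
            * gaussQ (2 * σ / α - (α * Real.log D - c) / σ)) := by
  exact integral_Ioi_of_hasDerivAt_of_nonneg'
    (fun x hx => hasDerivAt_G α σ c hα hσ (lt_of_lt_of_le hD hx))
    (fun x hx => mul_nonneg (gaussQ_nonneg _) (le_of_lt (lt_trans hD hx)))
    (G_tendsto_K α σ c hα hσ)

lemma integral_Ioo_eq (α σ c D : ℝ) (hα : 0 < α) (hσ : 0 < σ) (hD : 0 < D) :
    ∫ r in Ioo (0:ℝ) D, gaussQ ((α * Real.log r - c) / σ) * r
      = D ^ 2 / 2 * gaussQ ((α * Real.log D - c) / σ)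
        + Real.exp (2 * c / α + 2 * σ ^ 2 / α ^ 2) / 2
          * gaussQ (2 * σ / α - (α * Real.log D - c) / σ) := by
  set H : ℝ → ℝ := fun r => gaussQ ((α * Real.log r - c) / σ) * r with hH
  set G : ℝ → ℝ := fun s => s ^ 2 / 2 * gaussQ ((α * Real.log s - c) / σ)
      + Real.exp (2 * c / α + 2 * σ ^ 2 / α ^ 2) / 2
        * gaussQ (2 * σ / α - (α * Real.log s - c) / σ) with hG
  have hu0meas : Measurable fun r : ℝ => (α * Real.log r - c) / σ :=
    ((Real.measurable_log.const_mul α).sub_const c).div_const σ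
  have hHmeas : Measurable H := (continuous_gaussQ.measurable.comp hu0meas).mul measurable_id
  have hHbound : ∀ x ∈ Ioo (0:ℝ) D, ‖H x‖ ≤ D := by
    intro x hx
    rw [hH]
    simp only [Real.norm_eq_abs, abs_mul]
    calc |gaussQ ((α * Real.log x - c) / σ)| * |x| ≤ 1 * D := by
          apply mul_le_mul _ _ (abs_nonneg _) zero_le_one
          · rw [abs_of_nonneg (gaussQ_nonneg _)]; exact gaussQ_le_one _
          · rw [abs_of_nonneg (le_of_lt hx.1)]; exact le_of_lt hx.2
      _ = D := one_mul D
  have hcontH : ∀ x : ℝ, 0 < x → ContinuousAt H x := by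
    intro x hx
    apply ContinuousAt.mul _ continuousAt_id
    exact continuous_gaussQ.continuousAt.comp
      ((((Real.continuousAt_log hx.ne').const_mul α).sub continuousAt_const).div_const σ)
  have key : ∀ ε, ε ∈ Ioo (0:ℝ) D → ∫ r in Ioo ε D, H r = G D - G ε := by
    intro ε hε
    have hle : ε ≤ D := le_of_lt hε.2
    have huIcc : uIcc ε D = Icc ε D := uIcc_of_le hle
    have hFTC := intervalIntegral.integral_eq_sub_of_hasDerivAt
      (f := G) (f' := H)
      (fun x hx => by
        rw [huIcc] at hx
        exact hasDerivAt_G α σ c hα hσ (lt_of_lt_of_le hε.1 hx.1))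
      ((ContinuousOn.intervalIntegrable (fun x hx => by
        rw [huIcc] at hx
        exact (hcontH x (lt_of_lt_of_le hε.1 hx.1)).continuousWithinAt)))
    rw [← hFTC, intervalIntegral.integral_of_le hle, integral_Ioc_eq_integral_Ioo]
  have hInt : IntegrableOn H (Ioo (0:ℝ) D) :=
    Measure.integrableOn_of_bounded (M := D) (ne_of_lt measure_Ioo_lt_top)
      hHmeas.aestronglyMeasurable
      ((ae_restrict_iff' measurableSet_Ioo).2 (Filter.Eventually.of_forall hHbound))
  have hsplit : ∀ ε, ε ∈ Ioo (0:ℝ) D →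
      ∫ r in Ioo (0:ℝ) D, H r = (∫ r in Ioc 0 ε, H r) + ∫ r in Ioo ε D, H r := by
    intro ε hε
    rw [← setIntegral_union ((Iic_disjoint_Ioi le_rfl).mono Ioc_subset_Iic_self Ioo_subset_Ioi_self) measurableSet_Ioo
      (hInt.mono_set (by intro x hx; exact ⟨hx.1, lt_of_le_of_lt hx.2 hε.2⟩))
      (hInt.mono_set (by intro x hx; exact ⟨lt_trans hε.1 hx.1, hx.2⟩))]
    rw [Ioc_union_Ioo_eq_Ioo hε.1.le hε.2]
  have hsmall : Tendsto (fun ε => ∫ r in Ioc (0:ℝ) ε, H r) (𝓝[>] (0:ℝ)) (𝓝 0) := by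
    have hgD : Tendsto (fun ε : ℝ => D * ε) (𝓝[>] (0:ℝ)) (𝓝 0) := by
      have : Tendsto (fun ε : ℝ => D * ε) (𝓝 (0:ℝ)) (𝓝 (D * 0)) :=
        (continuous_const.mul continuous_id).tendsto 0
      simpa using this.mono_left nhdsWithin_le_nhds
    apply squeeze_zero_norm' ?_ hgD
    filter_upwards [Ioo_mem_nhdsGT_of_mem (⟨le_refl (0:ℝ), hD⟩ : (0:ℝ) ∈ Ico (0:ℝ) D)]
      with ε hε
    have hbd : ∀ x ∈ Ioc (0:ℝ) ε, ‖H x‖ ≤ D := fun x hx =>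
      hHbound x ⟨hx.1, lt_of_le_of_lt hx.2 hε.2⟩
    calc ‖∫ r in Ioc (0:ℝ) ε, H r‖ ≤ D * (volume (Ioc (0:ℝ) ε)).toReal :=
          norm_setIntegral_le_of_norm_le_const measure_Ioc_lt_top hbd
      _ = D * ε := by
          rw [Real.volume_Ioc, sub_zero, ENNReal.toReal_ofReal (le_of_lt hε.1)]
  have lim1 : Tendsto (fun ε => ∫ r in Ioo ε D, H r) (𝓝[>] (0:ℝ))
      (𝓝 (∫ r in Ioo (0:ℝ) D, H r)) := by
    have h2 : Tendsto (fun ε => (∫ r in Ioo (0:ℝ) D, H r) - ∫ r in Ioc (0:ℝ) ε, H r)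
        (𝓝[>] (0:ℝ)) (𝓝 ((∫ r in Ioo (0:ℝ) D, H r) - 0)) := tendsto_const_nhds.sub hsmall
    rw [sub_zero] at h2
    apply h2.congr'
    filter_upwards [Ioo_mem_nhdsGT_of_mem (⟨le_refl (0:ℝ), hD⟩ : (0:ℝ) ∈ Ico (0:ℝ) D)]
      with ε hε
    rw [hsplit ε hε]; ring
  have lim2 : Tendsto (fun ε => G D - G ε) (𝓝[>] (0:ℝ)) (𝓝 (G D)) := by
    have h3 : Tendsto (fun ε => G D - G ε) (𝓝[>] (0:ℝ)) (𝓝 (G D - 0)) :=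
      (tendsto_const_nhds (x := G D)).sub (G_tendsto_zero α σ c hα hσ)
    rwa [sub_zero] at h3
  have heq : (fun ε => ∫ r in Ioo ε D, H r) =ᶠ[𝓝[>] (0:ℝ)] (fun ε => G D - G ε) := by
    filter_upwards [Ioo_mem_nhdsGT_of_mem (⟨le_refl (0:ℝ), hD⟩ : (0:ℝ) ∈ Ico (0:ℝ) D)]
      with ε hε
    exact key ε hε
  exact tendsto_nhds_unique (lim1.congr' heq) lim2

lemma arg1_eq (α σ m t D : ℝ) (hα : 0 < α) (ht : 0 < t) (hD : 0 < D) :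
    (α * Real.log D - (Real.log t + m)) / σ = (Real.log (D ^ α / t) - m) / σ := by
  rw [Real.log_div (ne_of_gt (Real.rpow_pos_of_pos hD α)) ht.ne', Real.log_rpow hD]
  ring_nf

lemma arg2_eq (α σ m t D : ℝ) (hα : 0 < α) (hσ : 0 < σ) (ht : 0 < t) (hD : 0 < D) :
    2 * σ / α - (α * Real.log D - (Real.log t + m)) / σ
      = (σ ^ 2 * (2 / α) - Real.log (D ^ α / t) + m) / σ := by
  rw [Real.log_div (ne_of_gt (Real.rpow_pos_of_pos hD α)) ht.ne', Real.log_rpow hD]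
  field_simp
  ring

lemma expK_eq (α σ m t : ℝ) (hα : 0 < α) (ht : 0 < t) :
    Real.exp (2 * (Real.log t + m) / α + 2 * σ ^ 2 / α ^ 2)
      = t ^ (2 / α) * Real.exp (2 * σ ^ 2 / α ^ 2 + 2 * m / α) := by
  rw [Real.rpow_def_of_pos ht, ← Real.exp_add]
  congr 1
  field_simp
  ring

lemma final_Ioo {Ω : Type*} [MeasurableSpace Ω] (Pr : Measure Ω) [IsProbabilityMeasure Pr]
    (S : Ω → ℝ) (hS : Measurable S) (hSpos : ∀ᵐ ω ∂Pr, 0 < S ω)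
    (m σ : ℝ) (hσ : 0 < σ)
    (hlog : Measure.map (fun ω => Real.log (S ω)) Pr = gaussianReal m (Real.toNNReal (σ ^ 2)))
    (α t D : ℝ) (hα : 0 < α) (ht : 0 < t) (hD : 0 < D) :
    ∫ r in Ioo (0:ℝ) D, (Pr {ω | t * S ω > r ^ α}).toReal * r
      = D ^ 2 / 2 * gaussQ ((Real.log (D ^ α / t) - m) / σ)
        + t ^ (2 / α) * Real.exp (2 * σ ^ 2 / α ^ 2 + 2 * m / α) / 2
          * gaussQ ((σ ^ 2 * (2 / α) - Real.log (D ^ α / t) + m) / σ) := by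
  have hcongr : ∫ r in Ioo (0:ℝ) D, (Pr {ω | t * S ω > r ^ α}).toReal * r
      = ∫ r in Ioo (0:ℝ) D, gaussQ ((α * Real.log r - (Real.log t + m)) / σ) * r := by
    refine setIntegral_congr_fun measurableSet_Ioo fun r hr => ?_
    rw [prob_eq_gaussQ Pr S hS hSpos m σ hσ hlog α t hα ht r hr.1, sub_sub]
  rw [hcongr, integral_Ioo_eq α σ (Real.log t + m) D hα hσ hD,
    arg2_eq α σ m t D hα hσ ht hD, arg1_eq α σ m t D hα ht hD,
    expK_eq α σ m t hα ht]

lemma final_Ioi {Ω : Type*} [MeasurableSpace Ω] (Pr : Measure Ω) [IsProbabilityMeasure Pr]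
    (S : Ω → ℝ) (hS : Measurable S) (hSpos : ∀ᵐ ω ∂Pr, 0 < S ω)
    (m σ : ℝ) (hσ : 0 < σ)
    (hlog : Measure.map (fun ω => Real.log (S ω)) Pr = gaussianReal m (Real.toNNReal (σ ^ 2)))
    (α t D : ℝ) (hα : 0 < α) (ht : 0 < t) (hD : 0 < D) :
    ∫ r in Ioi D, (Pr {ω | t * S ω > r ^ α}).toReal * r
      = t ^ (2 / α) * Real.exp (2 * σ ^ 2 / α ^ 2 + 2 * m / α) / 2
        - (D ^ 2 / 2 * gaussQ ((Real.log (D ^ α / t) - m) / σ)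
          + t ^ (2 / α) * Real.exp (2 * σ ^ 2 / α ^ 2 + 2 * m / α) / 2
            * gaussQ ((σ ^ 2 * (2 / α) - Real.log (D ^ α / t) + m) / σ)) := by
  have hcongr : ∫ r in Ioi D, (Pr {ω | t * S ω > r ^ α}).toReal * r
      = ∫ r in Ioi D, gaussQ ((α * Real.log r - (Real.log t + m)) / σ) * r := by
    refine setIntegral_congr_fun measurableSet_Ioi fun r hr => ?_
    rw [prob_eq_gaussQ Pr S hS hSpos m σ hσ hlog α t hα ht r (lt_trans hD hr), sub_sub]
  rw [hcongr, integral_Ioi_eq α σ (Real.log t + m) D hα hσ hD,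
    arg2_eq α σ m t D hα hσ ht hD, arg1_eq α σ m t D hα ht hD,
    expK_eq α σ m t hα ht]


/-- Closed form for the intensity measure of the path-loss process (Lemma 1 of the paper).
`Sl` and `Sn` are lognormal with parameters `(ml, σl²)` and `(mn, σn²)` (i.e. their logarithms
are Gaussian), a link of length `r ≤ D` is LOS with probability `C` (path loss `r^{αl}/Sl`) and
NLOS otherwise (path loss `r^{αn}/Sn`), and links of length `r > D` are NLOS. -/
theorem intensity_measure_closed_form {Ω : Type*} [MeasurableSpace Ω]
    (Pr : Measure Ω) [IsProbabilityMeasure Pr]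
    (lam D C αl αn ml mn σl σn : ℝ)
    (hlam : 0 < lam) (hD : 0 < D) (hC0 : 0 < C) (hC1 : C ≤ 1)
    (hαl : 0 < αl) (hαn : 0 < αn) (hσl : 0 < σl) (hσn : 0 < σn)
    (Sl Sn : Ω → ℝ) (hSl : Measurable Sl) (hSn : Measurable Sn)
    (hSlpos : ∀ᵐ ω ∂Pr, 0 < Sl ω) (hSnpos : ∀ᵐ ω ∂Pr, 0 < Sn ω)
    (hSllog : Measure.map (fun ω => Real.log (Sl ω)) Pr
      = ProbabilityTheory.gaussianReal ml (Real.toNNReal (σl ^ 2)))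
    (hSnlog : Measure.map (fun ω => Real.log (Sn ω)) Pr
      = ProbabilityTheory.gaussianReal mn (Real.toNNReal (σn ^ 2)))
    (t : ℝ) (ht : 0 < t) :
    2 * Real.pi * lam
        * (C * (∫ r in Set.Ioo (0 : ℝ) D, (Pr {ω | t * Sl ω > r ^ αl}).toReal * r)
          + (1 - C) * (∫ r in Set.Ioo (0 : ℝ) D, (Pr {ω | t * Sn ω > r ^ αn}).toReal * r)
          + ∫ r in Set.Ioi D, (Pr {ω | t * Sn ω > r ^ αn}).toReal * r)
      = lam * Real.pi * C
          * (D ^ 2 * (gaussQ ((Real.log (D ^ αl / t) - ml) / σl)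
                - gaussQ ((Real.log (D ^ αn / t) - mn) / σn))
            + t ^ (2 / αl) * Real.exp (2 * σl ^ 2 / αl ^ 2 + 2 * ml / αl)
                * gaussQ ((σl ^ 2 * (2 / αl) - Real.log (D ^ αl / t) + ml) / σl)
            + t ^ (2 / αn) * Real.exp (2 * σn ^ 2 / αn ^ 2 + 2 * mn / αn)
                * (1 / C - gaussQ ((σn ^ 2 * (2 / αn) - Real.log (D ^ αn / t) + mn) / σn))) := by
  rw [final_Ioo Pr Sl hSl hSlpos ml σl hσl hSllog αl t D hαl ht hD,
    final_Ioo Pr Sn hSn hSnpos mn σn hσn hSnlog αn t D hαn ht hD,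
    final_Ioi Pr Sn hSn hSnpos mn σn hσn hSnlog αn t D hαn ht hD]
  field_simp
  ring
end

section
/- Let D > 0, C ∈ (0, 1], α_l, α_n > 0, m_l, m_n ∈ ℝ, σ_l, σ_n > 0, and define M : (0, ∞) → ℝ by M(t) = πC·{ D²·[ Q((ln(D^{α_l}/t) − m_l)/σ_l) − Q((ln(D^{α_n}/t) − m_n)/σ_n) ] + t^{2/α_l}·exp(2σ_l²/α_l² + 2m_l/α_l)·Q((σ_l²·(2/α_l) − ln(D^{α_l}/t) + m_l)/σ_l) + t^{2/α_n}·exp(2σ_n²/α_n² + 2m_n/α_n)·[ 1/C − Q((σ_n²·(2/α_n) − ln(D^{α_n}/t) + m_n)/σ_n) ] }. Then M is differentiable on (0, ∞) and, for every t > 0, M'(t) = πC·{ (D²/(√(2π)·t))·[ (1/σ_l)·exp(−((ln(D^{α_l}/t) − m_l)/√(2σ_l²))²) − (1/σ_n)·exp(−((ln(D^{α_n}/t) − m_n)/√(2σ_n²))²) ] + exp(2σ_l²/α_l² + 2m_l/α_l)·t^{2/α_l − 1}·[ (2/α_l)·Q((σ_l²·(2/α_l) − ln(D^{α_l}/t)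 + m_l)/σ_l) − (1/√(2πσ_l²))·exp(−((σ_l²·(2/α_l) − ln(D^{α_l}/t) + m_l)/√(2σ_l²))²) ] + exp(2σ_n²/α_n² + 2m_n/α_n)·t^{2/α_n − 1}·[ 2/(C·α_n) − (2/α_n)·Q((σ_n²·(2/α_n) − ln(D^{α_n}/t) + m_n)/σ_n) + (1/√(2πσ_n²))·exp(−((σ_n²·(2/α_n) − ln(D^{α_n}/t) + m_n)/√(2σ_n²))²) ] }. -/
open MeasureTheory Real Set

lemma gaussPdf_integrable :
    Integrable (fun u : ℝ => Real.exp (-u ^ 2 / 2) / Real.sqrt (2 * Real.pi)) := by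
  have h : Integrable (fun u : ℝ => Real.exp (-(1/2) * u ^ 2)) :=
    integrable_exp_neg_mul_sq (by norm_num)
  have := h.div_const (Real.sqrt (2 * Real.pi))
  convert this using 2 with u
  ring_nf

lemma gaussQ_hasDerivAt (x : ℝ) :
    HasDerivAt gaussQ (-(Real.exp (-x ^ 2 / 2) / Real.sqrt (2 * Real.pi))) x := by
  set f : ℝ → ℝ := fun u => Real.exp (-u ^ 2 / 2) / Real.sqrt (2 * Real.pi) with hf
  have hfi := gaussPdf_integrable
  have hrepr : gaussQ = fun y => (∫ u, f u) - (∫ u in Iic (0:ℝ), f u) - ∫ u in (0:ℝ)..y, f u := by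
    funext y
    have h1 : (∫ u in Iic y, f u) + ∫ u in Ioi y, f u = ∫ u, f u :=
      intervalIntegral.integral_Iic_add_Ioi hfi.integrableOn hfi.integrableOn
    have h2 : (∫ u in Iic y, f u) - ∫ u in Iic (0:ℝ), f u = ∫ u in (0:ℝ)..y, f u :=
      intervalIntegral.integral_Iic_sub_Iic hfi.integrableOn hfi.integrableOn
    simp only [gaussQ]
    linarith
  rw [hrepr]
  have hcont : Continuous f := by fun_prop
  have := (intervalIntegral.integral_hasDerivAt_right (a := (0:ℝ)) (b := x)
    hfi.intervalIntegrable (hcont.stronglyMeasurableAtFilter _ _) hcont.continuousAt)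
  refine ((hasDerivAt_const x ((∫ u, f u) - ∫ u in Iic (0:ℝ), f u)).sub this).congr_deriv ?_; ring

lemma aux_log (D α t : ℝ) (hD : 0 < D) (ht : 0 < t) :
    HasDerivAt (fun s => Real.log (D ^ α / s)) (-1 / t) t := by
  have hDα : (0:ℝ) < D ^ α := Real.rpow_pos_of_pos hD α
  have h1 : HasDerivAt (fun s : ℝ => D ^ α / s) (-(D ^ α) / t ^ 2) t := by
    refine ((hasDerivAt_const t (D ^ α : ℝ)).div (hasDerivAt_id' t) ht.ne').congr_deriv ?_; ring
  have h2 := h1.log (by positivity)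
  convert h2 using 1
  field_simp

lemma aux_Q1 (D α m σ t : ℝ) (hD : 0 < D) (hσ : 0 < σ) (ht : 0 < t) :
    HasDerivAt (fun s => gaussQ ((Real.log (D ^ α / s) - m) / σ))
      (Real.exp (-((Real.log (D ^ α / t) - m) / σ) ^ 2 / 2) / Real.sqrt (2 * Real.pi) / (t * σ))
      t := by
  have harg := ((aux_log D α t hD ht).sub_const m).div_const σ
  have h := (gaussQ_hasDerivAt ((Real.log (D ^ α / t) - m) / σ)).comp t harg
  refine h.congr_deriv ?_
  have : Real.sqrt (2 * Real.pi) ≠ 0 := by positivity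
  field_simp

lemma aux_Q2 (D α m σ t : ℝ) (hD : 0 < D) (hσ : 0 < σ) (ht : 0 < t) :
    HasDerivAt (fun s => gaussQ ((σ ^ 2 * (2 / α) - Real.log (D ^ α / s) + m) / σ))
      (-(Real.exp (-((σ ^ 2 * (2 / α) - Real.log (D ^ α / t) + m) / σ) ^ 2 / 2)
          / Real.sqrt (2 * Real.pi) / (t * σ))) t := by
  have harg := (((aux_log D α t hD ht).const_sub (σ ^ 2 * (2 / α))).add_const m).div_const σ
  have h := (gaussQ_hasDerivAt ((σ ^ 2 * (2 / α) - Real.log (D ^ α / t) + m) / σ)).comp t harg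
  refine h.congr_deriv ?_
  have : Real.sqrt (2 * Real.pi) ≠ 0 := by positivity
  field_simp

noncomputable def Mfun (D C αl αn ml mn σl σn : ℝ) (t : ℝ) : ℝ :=
  Real.pi * C
    * (D ^ 2 * (gaussQ ((Real.log (D ^ αl / t) - ml) / σl)
          - gaussQ ((Real.log (D ^ αn / t) - mn) / σn))
      + t ^ (2 / αl) * Real.exp (2 * σl ^ 2 / αl ^ 2 + 2 * ml / αl)
          * gaussQ ((σl ^ 2 * (2 / αl) - Real.log (D ^ αl / t) + ml) / σl)
      + t ^ (2 / αn) * Real.exp (2 * σn ^ 2 / αn ^ 2 + 2 * mn / αn)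
          * (1 / C - gaussQ ((σn ^ 2 * (2 / αn) - Real.log (D ^ αn / t) + mn) / σn)))

/-- The derivative `M'(t)` of the normalized intensity measure, equation (4) of the paper. -/
noncomputable def Mderiv (D C αl αn ml mn σl σn : ℝ) (t : ℝ) : ℝ :=
  Real.pi * C
    * (D ^ 2 / (Real.sqrt (2 * Real.pi) * t)
          * ((1 / σl) * Real.exp (-((Real.log (D ^ αl / t) - ml) / Real.sqrt (2 * σl ^ 2)) ^ 2)
            - (1 / σn) * Real.exp (-((Real.log (D ^ αn / t) - mn) / Real.sqrt (2 * σn ^ 2)) ^ 2))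
      + Real.exp (2 * σl ^ 2 / αl ^ 2 + 2 * ml / αl) * t ^ (2 / αl - 1)
          * ((2 / αl) * gaussQ ((σl ^ 2 * (2 / αl) - Real.log (D ^ αl / t) + ml) / σl)
            - (1 / Real.sqrt (2 * Real.pi * σl ^ 2))
                * Real.exp (-((σl ^ 2 * (2 / αl) - Real.log (D ^ αl / t) + ml)
                    / Real.sqrt (2 * σl ^ 2)) ^ 2))
      + Real.exp (2 * σn ^ 2 / αn ^ 2 + 2 * mn / αn) * t ^ (2 / αn - 1)
          * (2 / (C * αn)
            - (2 / αn) * gaussQ ((σn ^ 2 * (2 / αn) - Real.log (D ^ αn / t) + mn) / σn)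
            + (1 / Real.sqrt (2 * Real.pi * σn ^ 2))
                * Real.exp (-((σn ^ 2 * (2 / αn) - Real.log (D ^ αn / t) + mn)
                    / Real.sqrt (2 * σn ^ 2)) ^ 2)))

/-- Differentiability of the normalized intensity measure `M` on `(0,∞)` together with the
closed form (equation (4) of the paper) for its derivative `M'`. -/
theorem Mfun_hasDerivAt (D C αl αn ml mn σl σn : ℝ)
    (hD : 0 < D) (hC0 : 0 < C) (hC1 : C ≤ 1) (hαl : 0 < αl) (hαn : 0 < αn)
    (hσl : 0 < σl) (hσn : 0 < σn) :
    ∀ t > (0 : ℝ), HasDerivAt (Mfun D C αl αn ml mn σl σn)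
      (Mderiv D C αl αn ml mn σl σn t) t := by
  intro t ht
  have hEl : (0:ℝ) < Real.exp (2 * σl ^ 2 / αl ^ 2 + 2 * ml / αl) := Real.exp_pos _
  have hA := ((aux_Q1 D αl ml σl t hD hσl ht).sub (aux_Q1 D αn mn σn t hD hσn ht)).const_mul
      (D ^ 2)
  have hrl := (Real.hasDerivAt_rpow_const (x := t) (p := 2 / αl) (Or.inl ht.ne')).mul_const
      (Real.exp (2 * σl ^ 2 / αl ^ 2 + 2 * ml / αl))
  have hrn := (Real.hasDerivAt_rpow_const (x := t) (p := 2 / αn) (Or.inl ht.ne')).mul_const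
      (Real.exp (2 * σn ^ 2 / αn ^ 2 + 2 * mn / αn))
  have hB := hrl.mul (aux_Q2 D αl ml σl t hD hσl ht)
  have hC' := hrn.mul ((hasDerivAt_const t (1 / C)).sub (aux_Q2 D αn mn σn t hD hσn ht))
  have htot := ((hA.add hB).add hC').const_mul (Real.pi * C)
  unfold Mfun Mderiv
  refine htot.congr_deriv ?_
  have h2σl : Real.sqrt (2 * σl ^ 2) ^ 2 = 2 * σl ^ 2 := Real.sq_sqrt (by positivity)
  have h2σn : Real.sqrt (2 * σn ^ 2) ^ 2 = 2 * σn ^ 2 := Real.sq_sqrt (by positivity)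
  have hsl : Real.sqrt (2 * Real.pi * σl ^ 2) = Real.sqrt (2 * Real.pi) * σl := by
    rw [Real.sqrt_mul (by positivity), Real.sqrt_sq hσl.le]
  have hsn : Real.sqrt (2 * Real.pi * σn ^ 2) = Real.sqrt (2 * Real.pi) * σn := by
    rw [Real.sqrt_mul (by positivity), Real.sqrt_sq hσn.le]
  have hS : Real.sqrt (2 * Real.pi) ≠ 0 := by positivity
  simp only [div_pow, h2σl, h2σn, hsl, hsn, Real.rpow_sub ht, Real.rpow_one, Pi.sub_apply]
  ring_nf
end

section
/- Let c ≥ 0 and d > 0, and set t = c/d. Then the numbers K_t(c,d,n), n = 1, 2, 3, …, form a probability mass function with mean 1 + (9/7)·t; that is, ∑_{n≥1} K_t(c,d,n) = 1 and ∑_{n≥1} n·K_t(c,d,n) = 1 + (9/7)·(c/d) (the paper writes the coefficient 9/7 = 4.5/3.5 rounded as 1.28). -/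
open Real
open MeasureTheory Set

lemma real_exp_hasSum (x : ℝ) : HasSum (fun n : ℕ => x ^ n / n.factorial) (Real.exp x) := by
  rw [Real.exp_eq_exp_ℝ]
  exact NormedSpace.expSeries_div_hasSum_exp x

lemma hasSum_gamma_series {a x : ℝ} (ha : 0 < a) (hx0 : 0 ≤ x) (hx1 : x < 1) :
    HasSum (fun n : ℕ => Real.Gamma ((n : ℝ) + a) / n.factorial * x ^ n)
      (Real.Gamma a * (1 - x) ^ (-a)) := by
  set f : ℕ → ℝ := fun n => Real.Gamma ((n : ℝ) + a) / n.factorial * x ^ n with hf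
  have hfnn : ∀ n, 0 ≤ f n := by
    intro n
    have h1 : 0 < Real.Gamma ((n : ℝ) + a) := Real.Gamma_pos_of_pos (by positivity)
    positivity
  set S : ℝ := Real.Gamma a * (1 - x) ^ (-a) with hS
  have h1x : 0 < 1 - x := by linarith
  have hSnn : 0 ≤ S := by
    have := Real.Gamma_pos_of_pos ha
    positivity
  have key : (∑' n, ENNReal.ofReal (f n)) = ENNReal.ofReal S := by
    have stepA : ∀ n : ℕ, ENNReal.ofReal (f n) =
        ∫⁻ t in Ioi (0:ℝ), ENNReal.ofReal (Real.exp (-t) * t ^ ((n : ℝ) + a - 1) * (x ^ n / n.factorial)) := by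
      intro n
      have hna : 0 < (n : ℝ) + a := by positivity
      have hint := Real.GammaIntegral_convergent hna
      have hgam : Real.Gamma ((n : ℝ) + a) = ∫ t in Ioi (0:ℝ), Real.exp (-t) * t ^ ((n : ℝ) + a - 1) :=
        Real.Gamma_eq_integral hna
      have hnn : 0 ≤ᵐ[volume.restrict (Ioi (0:ℝ))]
          fun t => Real.exp (-t) * t ^ ((n : ℝ) + a - 1) := by
        filter_upwards [ae_restrict_mem measurableSet_Ioi] with t ht
        have : (0:ℝ) < t := ht
        positivity
      have h2 : ENNReal.ofReal (Real.Gamma ((n : ℝ) + a)) =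
          ∫⁻ t in Ioi (0:ℝ), ENNReal.ofReal (Real.exp (-t) * t ^ ((n : ℝ) + a - 1)) := by
        rw [hgam]
        exact MeasureTheory.ofReal_integral_eq_lintegral_ofReal hint hnn
      have hfn : f n = Real.Gamma ((n : ℝ) + a) * (x ^ n / n.factorial) := by
        simp only [hf]; ring
      rw [hfn, ENNReal.ofReal_mul (Real.Gamma_pos_of_pos hna).le, h2,
        ← MeasureTheory.lintegral_mul_const _ (by fun_prop)]
      congr 1
      ext t
      rw [← ENNReal.ofReal_mul' (by positivity)]
    have stepC : ∀ t ∈ Ioi (0:ℝ),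
        (∑' n : ℕ, ENNReal.ofReal (Real.exp (-t) * t ^ ((n : ℝ) + a - 1) * (x ^ n / n.factorial)))
          = ENNReal.ofReal (t ^ (a - 1) * Real.exp (-((1 - x) * t))) := by
      intro t ht
      have ht' : (0:ℝ) < t := ht
      have hterm : ∀ n : ℕ, Real.exp (-t) * t ^ ((n : ℝ) + a - 1) * (x ^ n / n.factorial)
          = Real.exp (-t) * t ^ (a - 1) * ((x * t) ^ n / n.factorial) := by
        intro n
        have h3 : t ^ ((n : ℝ) + a - 1) = t ^ (n : ℕ) * t ^ (a - 1) := by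
          rw [← Real.rpow_natCast t n, ← Real.rpow_add ht']
          ring_nf
        rw [h3, mul_pow]
        ring
      have hsum : HasSum (fun n : ℕ => Real.exp (-t) * t ^ ((n : ℝ) + a - 1) * (x ^ n / n.factorial))
          (Real.exp (-t) * t ^ (a - 1) * Real.exp (x * t)) := by
        simp only [hterm]
        exact (real_exp_hasSum (x * t)).mul_left _
      have hnn : ∀ n : ℕ, (0:ℝ) ≤ Real.exp (-t) * t ^ ((n : ℝ) + a - 1) * (x ^ n / n.factorial) := by
        intro n; positivity
      rw [← ENNReal.ofReal_tsum_of_nonneg hnn hsum.summable, hsum.tsum_eq]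
      congr 1
      rw [show -((1 - x) * t) = -t + x * t by ring, Real.exp_add]
      ring
    have stepD : (∫⁻ t in Ioi (0:ℝ), ENNReal.ofReal (t ^ (a - 1) * Real.exp (-((1 - x) * t))))
        = ENNReal.ofReal S := by
      have hint : IntegrableOn (fun t : ℝ => t ^ (a - 1) * Real.exp (-((1 - x) * t))) (Ioi 0) := by
        have h5 := integrableOn_rpow_mul_exp_neg_mul_rpow (p := 1) (s := a - 1) (b := 1 - x)
          (by linarith) zero_lt_one h1x
        simp only [Real.rpow_one, neg_mul] at h5
        exact h5
      have hnn : 0 ≤ᵐ[volume.restrict (Ioi (0:ℝ))]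
          fun t => t ^ (a - 1) * Real.exp (-((1 - x) * t)) := by
        filter_upwards [ae_restrict_mem measurableSet_Ioi] with t ht
        have : (0:ℝ) < t := ht
        positivity
      rw [← MeasureTheory.ofReal_integral_eq_lintegral_ofReal hint hnn,
        Real.integral_rpow_mul_exp_neg_mul_Ioi ha h1x]
      congr 1
      rw [hS, one_div, Real.inv_rpow h1x.le, ← Real.rpow_neg h1x.le]
      ring
    calc (∑' n, ENNReal.ofReal (f n))
        = ∑' n : ℕ, ∫⁻ t in Ioi (0:ℝ), ENNReal.ofReal (Real.exp (-t) * t ^ ((n : ℝ) + a - 1) * (x ^ n / n.factorial)) := by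
          exact tsum_congr stepA
      _ = ∫⁻ t in Ioi (0:ℝ), ∑' n : ℕ, ENNReal.ofReal (Real.exp (-t) * t ^ ((n : ℝ) + a - 1) * (x ^ n / n.factorial)) := by
          rw [MeasureTheory.lintegral_tsum]
          intro n
          fun_prop
      _ = ∫⁻ t in Ioi (0:ℝ), ENNReal.ofReal (t ^ (a - 1) * Real.exp (-((1 - x) * t))) := by
          exact setLIntegral_congr_fun measurableSet_Ioi stepC
      _ = ENNReal.ofReal S := stepD
  -- conclude HasSum from ENNReal tsum
  have hne : (∑' n, ENNReal.ofReal (f n)) ≠ ⊤ := by rw [key]; exact ENNReal.ofReal_ne_top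
  have hsummable : Summable f := by
    have := ENNReal.summable_toReal hne
    refine this.congr fun n => ?_
    rw [ENNReal.toReal_ofReal (hfnn n)]
  have htsum : ∑' n, f n = S := by
    have h4 : (∑' n, ENNReal.ofReal (f n)).toReal = S := by
      rw [key, ENNReal.toReal_ofReal hSnn]
    rw [← h4, ENNReal.tsum_toReal_eq (fun n => ENNReal.ofReal_ne_top)]
    exact tsum_congr fun n => (ENNReal.toReal_ofReal (hfnn n)).symm
  exact htsum ▸ hsummable.hasSum

/-- The load PMF of the tagged base station (Proposition 2 of the paper), defined for `n ≥ 1`: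
`K_t(c,d,n) = (3.5^{3.5}/(n−1)!)·(Γ(n+3.5)/Γ(3.5))·(c/d)^{n−1}·(3.5 + c/d)^{−(n+3.5)}`. -/
noncomputable def Ktpmf (c d : ℝ) (n : ℕ) : ℝ :=
  (3.5 : ℝ) ^ (3.5 : ℝ) / ((n - 1).factorial : ℝ)
    * (Real.Gamma ((n : ℝ) + 3.5) / Real.Gamma 3.5)
    * (c / d) ^ (n - 1) * (3.5 + c / d) ^ (-((n : ℝ) + 3.5))

/-- For `c ≥ 0`, `d > 0`, the numbers `K_t(c,d,n)`, `n ≥ 1`, form a probability mass function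
with mean `1 + (9/7)·(c/d)` (the paper rounds `9/7 = 4.5/3.5` as `1.28`):
`∑_{n≥1} K_t(c,d,n) = 1` and `∑_{n≥1} n·K_t(c,d,n) = 1 + (9/7)·(c/d)`. -/
theorem Ktpmf_sum_one_and_mean (c d : ℝ) (hc : 0 ≤ c) (hd : 0 < d) :
    (∑' n : ℕ, Ktpmf c d (n + 1)) = 1
    ∧ (∑' n : ℕ, ((n : ℝ) + 1) * Ktpmf c d (n + 1)) = 1 + (9 / 7) * (c / d) := by
  have hK0 : ∀ n : ℕ, Ktpmf c d (n + 1)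
      = (3.5 : ℝ) ^ (3.5 : ℝ) / (n.factorial : ℝ)
        * (Real.Gamma ((n : ℝ) + 4.5) / Real.Gamma 3.5)
        * (c / d) ^ n * (3.5 + c / d) ^ (-((n : ℝ) + 4.5)) := by
    intro n
    simp only [Ktpmf, Nat.add_sub_cancel]
    push_cast
    rw [show ((n:ℝ) + 1) + 3.5 = (n:ℝ) + 4.5 by ring]
  simp only [hK0]
  set t : ℝ := c / d with htdef
  have ht : 0 ≤ t := div_nonneg hc hd.le
  clear_value t
  clear htdef hc hd
  have hb : (0:ℝ) < 3.5 + t := by linarith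
  set x : ℝ := t / (3.5 + t) with hxdef
  have hx0 : 0 ≤ x := div_nonneg ht hb.le
  have hx1 : x < 1 := (div_lt_one hb).mpr (by norm_num)
  have h1x : 1 - x = 3.5 / (3.5 + t) := by
    rw [hxdef]
    field_simp
    ring
  have hxb : x * (3.5 + t) = t := div_mul_cancel₀ t hb.ne'
  have hG : (0:ℝ) < Real.Gamma 3.5 := Real.Gamma_pos_of_pos (by norm_num)
  have hG45 : Real.Gamma (4.5:ℝ) = 3.5 * Real.Gamma 3.5 := by
    rw [show (4.5:ℝ) = 3.5 + 1 by norm_num, Real.Gamma_add_one (by norm_num)]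
  have hG55 : Real.Gamma (5.5:ℝ) = 4.5 * Real.Gamma 4.5 := by
    rw [show (5.5:ℝ) = 4.5 + 1 by norm_num, Real.Gamma_add_one (by norm_num)]
  set C : ℝ := (3.5:ℝ) ^ (3.5:ℝ) / Real.Gamma 3.5 * (3.5 + t) ^ (-(4.5:ℝ)) with hCdef
  -- rewrite of the pmf terms
  have hK : ∀ n : ℕ,
      (3.5 : ℝ) ^ (3.5 : ℝ) / (n.factorial : ℝ)
        * (Real.Gamma ((n : ℝ) + 4.5) / Real.Gamma 3.5)
        * t ^ n * (3.5 + t) ^ (-((n : ℝ) + 4.5))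
      = C * (Real.Gamma ((n : ℝ) + 4.5) / n.factorial * x ^ n) := by
    intro n
    have h1 : (3.5 + t) ^ (-((n:ℝ) + 4.5)) = ((3.5 + t) ^ n)⁻¹ * (3.5 + t) ^ (-(4.5:ℝ)) := by
      rw [show -((n:ℝ) + 4.5) = (-(n:ℝ)) + (-(4.5:ℝ)) by ring, Real.rpow_add hb,
        Real.rpow_neg hb.le, Real.rpow_natCast]
    have h2 : x ^ n = t ^ n / (3.5 + t) ^ n := div_pow t _ n
    rw [h1, h2, hCdef]
    have hbn : ((3.5 + t) ^ n : ℝ) ≠ 0 := pow_ne_zero n hb.ne'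
    have hfac : ((n.factorial : ℝ)) ≠ 0 := Nat.cast_ne_zero.mpr n.factorial_ne_zero
    field_simp
  simp only [hK]
  -- the two HasSum facts
  have hs1 := hasSum_gamma_series (a := 4.5) (x := x) (by norm_num) hx0 hx1
  have hs2 := hasSum_gamma_series (a := 5.5) (x := x) (by norm_num) hx0 hx1
  -- rpow arithmetic
  have hPne : (3.5 + t) ^ (-(4.5:ℝ)) ≠ 0 := (Real.rpow_pos_of_pos hb _).ne'
  have hA : (1 - x) ^ (-(4.5:ℝ)) = (3.5:ℝ) ^ (-(4.5:ℝ)) / (3.5 + t) ^ (-(4.5:ℝ)) := by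
    rw [h1x, Real.div_rpow (by norm_num) hb.le]
  have hB : (1 - x) ^ (-(5.5:ℝ)) = (3.5:ℝ) ^ (-(5.5:ℝ)) / ((3.5 + t) ^ (-(4.5:ℝ)) * (3.5 + t)⁻¹) := by
    rw [h1x, Real.div_rpow (by norm_num) hb.le]
    congr 1
    rw [show (-(5.5:ℝ)) = (-(4.5:ℝ)) + (-(1:ℝ)) by norm_num, Real.rpow_add hb,
      Real.rpow_neg_one]
  have hE1 : (3.5:ℝ) ^ (3.5:ℝ) * (3.5:ℝ) ^ (-(4.5:ℝ)) = 2/7 := by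
    rw [← Real.rpow_add (by norm_num), show (3.5:ℝ) + -(4.5:ℝ) = (-1 : ℝ) by norm_num,
      Real.rpow_neg_one]
    norm_num
  have hE2 : (3.5:ℝ) ^ (3.5:ℝ) * (3.5:ℝ) ^ (-(5.5:ℝ)) = 4/49 := by
    rw [← Real.rpow_add (by norm_num), show (3.5:ℝ) + -(5.5:ℝ) = (-2 : ℝ) by norm_num]
    rw [show ((-2:ℝ)) = ((-2 : ℤ) : ℝ) by norm_num, Real.rpow_intCast]
    norm_num
  have k1 : C * (Real.Gamma 4.5 * (1 - x) ^ (-(4.5:ℝ))) = 1 := by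
    rw [hCdef, hA, hG45]
    field_simp
    linear_combination (7/2) * hE1
  have k2 : C * (Real.Gamma 5.5 * (1 - x) ^ (-(5.5:ℝ))) = 9/7 * (3.5 + t) := by
    rw [hCdef, hB, hG55, hG45]
    field_simp
    linear_combination (441/4) * hE2
  constructor
  · rw [(hs1.mul_left C).tsum_eq, k1]
  · have h6 := (hs2.mul_left C).sub ((hs1.mul_left C).mul_left 3.5)
    have hfun : (fun n : ℕ => C * (Real.Gamma ((n:ℝ) + 5.5) / n.factorial * x ^ n)
          - 3.5 * (C * (Real.Gamma ((n:ℝ) + 4.5) / n.factorial * x ^ n)))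
        = fun n : ℕ => ((n : ℝ) + 1) * (C * (Real.Gamma ((n:ℝ) + 4.5) / n.factorial * x ^ n)) := by
      funext n
      have h7 : Real.Gamma ((n:ℝ) + 5.5) = ((n:ℝ) + 4.5) * Real.Gamma ((n:ℝ) + 4.5) := by
        rw [show (n:ℝ) + 5.5 = ((n:ℝ) + 4.5) + 1 by ring, Real.Gamma_add_one (by positivity)]
      rw [h7]
      ring
    rw [hfun] at h6
    rw [h6.tsum_eq, k2, k1]
    ring
end
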